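/- arXiv:2403.06957 — 2 statements merged into one kernel-verified Lean document; each statement's English description precedes it below -/
import Mathlib

section
/- In the monoid M = IOF_n^par, for all a, b ∈ M: a J b if and only if dom(a) ∼ dom(b), and equivalently a J b if and only if im(a) ∼ im(b). -/
namespace IOFpar

/-- A partial injection on the chain `{1, …, n}`: a partial function with domain and
image contained in `{1, …, n}` that is injective where defined. -/
structure PInj (n : ℕ) where
  f : ℕ → Option ℕ
  mem_bounds : ∀ ⦃x y : ℕ⦄, f x = some y → x ∈ Finset.Icc 1 n ∧ y ∈ Finset.Icc 1 n
  inj : ∀ ⦃x₁ x₂ y : ℕ⦄, f x₁ = some y → f x₂ = some y → x₁ = x₂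

/-- The domain of a partial injection. -/
def PInj.dom {n : ℕ} (α : PInj n) : Finset ℕ :=
  (Finset.Icc 1 n).filter fun x => (α.f x).isSome

open Classical in
/-- The image of a partial injection. -/
noncomputable def PInj.im {n : ℕ} (α : PInj n) : Finset ℕ :=
  (Finset.Icc 1 n).filter fun y => ∃ x, α.f x = some y

/-- The rank of a partial injection: the size of its domain. -/
def PInj.rank {n : ℕ} (α : PInj n) : ℕ := α.dom.card

/-- The value of `α` at `x` (with junk value `0` outside the domain). -/
def PInj.app {n : ℕ} (α : PInj n) (x : ℕ) : ℕ := (α.f x).getD 0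

/-- Composition of partial injections: `α.comp β` applies `α` first, then `β`
(so it corresponds to the product `αβ` with arguments written on the left). -/
def PInj.comp {n : ℕ} (α β : PInj n) : PInj n where
  f x := (α.f x).bind β.f
  mem_bounds := by
    intro x y h
    rcases Option.bind_eq_some_iff.mp h with ⟨z, hz, hzy⟩
    exact ⟨(α.mem_bounds hz).1, (β.mem_bounds hzy).2⟩
  inj := by
    intro x₁ x₂ y h₁ h₂
    rcases Option.bind_eq_some_iff.mp h₁ with ⟨z₁, hz₁, hz₁y⟩
    rcases Option.bind_eq_some_iff.mp h₂ with ⟨z₂, hz₂, hz₂y⟩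
    obtain rfl : z₁ = z₂ := β.inj hz₁y hz₂y
    exact α.inj hz₁ hz₂

/-- The empty transformation `ε`. -/
def epsilon (n : ℕ) : PInj n where
  f _ := none
  mem_bounds := by intro x y h; simp at h
  inj := by intro x₁ x₂ y h; simp at h

/-- The fence (zig-zag) order on `{1, …, n}`: `k ≺ m` iff `|k - m| = 1`, `k` is odd
and `m` is even. -/
def fence (k m : ℕ) : Prop := (m = k + 1 ∨ k = m + 1) ∧ Odd k ∧ Even m

/-- `IOF n` is the set `IOF_n^par` of all partial injections on `{1, …, n}` that are
order-preserving, parity-preserving, fence-preserving, and whose inverse is also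
fence-preserving. -/
def IOF (n : ℕ) : Set (PInj n) :=
  {α | (∀ ⦃x y x' y' : ℕ⦄, α.f x = some x' → α.f y = some y' → x < y → x' < y') ∧
       (∀ ⦃x y : ℕ⦄, α.f x = some y → x % 2 = y % 2) ∧
       (∀ ⦃x y x' y' : ℕ⦄, α.f x = some x' → α.f y = some y' → fence x y → fence x' y') ∧
       (∀ ⦃x y x' y' : ℕ⦄, α.f x = some x' → α.f y = some y' → fence x' y' → fence x y)}

/-- The increasing enumeration of a finite set of naturals. -/
def sortedList (A : Finset ℕ) : List ℕ := A.sort (· ≤ ·)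

/-- The relation `∼` on subsets of `{1, …, n}`:
`A ∼ B` iff `|A| = |B|`, corresponding elements (in increasing order) have the
same parity, and consecutive elements are at distance 1 in `A` iff they are in `B`. -/
def sim (A B : Finset ℕ) : Prop :=
  A.card = B.card ∧
  (∀ (r : ℕ) (hA : r < (sortedList A).length) (hB : r < (sortedList B).length),
    (sortedList A)[r] % 2 = (sortedList B)[r] % 2) ∧
  (∀ (r : ℕ) (hA : r + 1 < (sortedList A).length) (hB : r + 1 < (sortedList B).length),
    ((sortedList A)[r + 1] = (sortedList A)[r] + 1 ↔
      (sortedList B)[r + 1] = (sortedList B)[r] + 1))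

/-- `P ⊆ P(n̄)` is admissible: it contains `∅`, is convex, and is closed under `∼`. -/
def Admissible (n : ℕ) (P : Set (Finset ℕ)) : Prop :=
  (∀ A ∈ P, A ⊆ Finset.Icc 1 n) ∧
  (∅ : Finset ℕ) ∈ P ∧
  (∀ A ∈ P, ∀ B ∈ P, ∀ C : Finset ℕ, A ⊆ C → C ⊆ B → C ∈ P) ∧
  (∀ y ∈ P, ∀ z : Finset ℕ, z ⊆ Finset.Icc 1 n → sim z y → z ∈ P)

/-- `I_X = {α ∈ IOF_n^par : dom(α) ∈ X}`. -/
def IX (n : ℕ) (X : Set (Finset ℕ)) : Set (PInj n) :=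
  {α | α ∈ IOF n ∧ α.dom ∈ X}

/-- An ideal of the monoid `IOF_n^par`. -/
def IsIdeal (n : ℕ) (I : Set (PInj n)) : Prop :=
  I.Nonempty ∧ I ⊆ IOF n ∧ ∀ a ∈ I, ∀ b ∈ IOF n, a.comp b ∈ I ∧ b.comp a ∈ I

/-- `del y t` is `y^[t+1]` in the paper's (1-based) notation: `y` with its `t`-th
smallest element removed (`t` being 0-based here). -/
def del (y : Finset ℕ) (t : ℕ) : Finset ℕ := y.erase ((sortedList y).getD t 0)

/-- `x ⊑ y`: `x` is obtained from `y` by removing one element. -/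
def sqsub (x y : Finset ℕ) : Prop := ∃ t < y.card, x = del y t

/-- `A_Γ = {Δ ∈ P : Δ ∼ Γ}`. -/
def Aset (P : Set (Finset ℕ)) (Γ : Finset ℕ) : Set (Finset ℕ) :=
  {Δ ∈ P | sim Δ Γ}

/-- `B_Γ = {Δ^[t] : Δ ∈ A_Γ, t ∈ {1,…,|Δ|}}`. -/
def Bset (P : Set (Finset ℕ)) (Γ : Finset ℕ) : Set (Finset ℕ) :=
  {D | ∃ Δ ∈ Aset P Γ, ∃ t < Δ.card, D = del Δ t}

/-- `B = {B_Γ : Γ ∈ P, |Γ| ≥ 2, |A_Γ| ≥ 2}`. -/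
def Bfam (P : Set (Finset ℕ)) : Set (Set (Finset ℕ)) :=
  {E | ∃ Γ ∈ P, 2 ≤ Γ.card ∧ 2 ≤ (Aset P Γ).ncard ∧ E = Bset P Γ}

/-- `C = {{g} : g ∈ P, (g ⊑ y for some y ∈ P with y ≁ z for all z ∈ P \ {y}) or
(g ⋢ z for all z ∈ P)}`. -/
def Cfam (P : Set (Finset ℕ)) : Set (Set (Finset ℕ)) :=
  {D | ∃ g ∈ P, D = {g} ∧
    ((∃ y ∈ P, sqsub g y ∧ ∀ z ∈ P, z ≠ y → ¬ sim y z) ∨ (∀ z ∈ P, ¬ sqsub g z))}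

/-- `BC_{Δ₁} = {Δ ∈ B ∪ C : x ∼ y for all x ∈ Δ, y ∈ Δ₁}`. -/
def BCset (P : Set (Finset ℕ)) (Δ₁ : Set (Finset ℕ)) : Set (Set (Finset ℕ)) :=
  {Δ ∈ Bfam P ∪ Cfam P | ∀ x ∈ Δ, ∀ y ∈ Δ₁, sim x y}

/-- `T_Δ = {c ∈ I_P : dom(c) ∈ Δ, im(c) ∈ Δ}`. -/
def Tset (n : ℕ) (P : Set (Finset ℕ)) (Δ : Set (Finset ℕ)) : Set (PInj n) :=
  {c ∈ IX n P | c.dom ∈ Δ ∧ c.im ∈ Δ}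

/-- `T_Q` for a pair `Q = (Q₁, Q₂)`. -/
def TQ (n : ℕ) (P : Set (Finset ℕ)) (Q₁ Q₂ : Set (Set (Finset ℕ))) : Set (PInj n) :=
  {c ∈ IX n P | (∃ Δ ∈ Q₁, c.dom ∈ Δ) ∧ (∃ Δ ∈ Q₂, c.im ∈ Δ)}

/-- `I_P^u`: the elements of `I_P` that are not expressible in the special product form. -/
def Iu (n : ℕ) (P : Set (Finset ℕ)) : Set (PInj n) :=
  {α ∈ IX n P | ¬ ∃ y₁ ∈ P, ∃ z₁ ∈ P, ∃ y₂ ∈ P, ∃ z₂ ∈ P, ∃ r < y₁.card, ∃ s < y₁.card,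
    y₁.card = z₁.card ∧ 2 ≤ y₁.card ∧
    sim y₂ y₁ ∧ sim z₂ z₁ ∧
    del y₁ r = y₁ ∩ z₁ ∧ del z₁ s = y₁ ∩ z₁ ∧
    sim (del y₂ r) (del z₂ s) ∧ sim (del z₂ s) (y₁ ∩ z₁) ∧
    α.dom = del y₂ r ∧ α.im = del z₂ s}

/-- `T` is a subsemigroup of `S` (a subset of `S` closed under composition). -/
def IsSubsemigroup (n : ℕ) (S T : Set (PInj n)) : Prop :=
  T ⊆ S ∧ ∀ a ∈ T, ∀ b ∈ T, a.comp b ∈ T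

/-- `T` is a maximal subsemigroup of `S`. -/
def IsMaxSubsemigroup (n : ℕ) (S T : Set (PInj n)) : Prop :=
  IsSubsemigroup n S T ∧ T ≠ S ∧
  ∀ U : Set (PInj n), IsSubsemigroup n S U → T ⊆ U → U ⊆ S → U = T ∨ U = S

/-- The left "translate set" `Ma` in the monoid `M = IOF_n^par`. -/
def lset (n : ℕ) (a : PInj n) : Set (PInj n) := {c | ∃ m ∈ IOF n, m.comp a = c}

/-- The right "translate set" `aM` in the monoid `M = IOF_n^par`. -/
def rset (n : ℕ) (a : PInj n) : Set (PInj n) := {c | ∃ m ∈ IOF n, a.comp m = c}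

/-- The two-sided "translate set" `MaM` in the monoid `M = IOF_n^par`. -/
def jset (n : ℕ) (a : PInj n) : Set (PInj n) :=
  {c | ∃ m₁ ∈ IOF n, ∃ m₂ ∈ IOF n, (m₁.comp a).comp m₂ = c}


/-! ### Auxiliary lemmas -/

section Aux

variable {n : ℕ}

theorem PInj.ext' {α β : PInj n} (h : α.f = β.f) : α = β := by
  cases α; cases β; simp_all

theorem PInj.mem_dom {α : PInj n} {x : ℕ} : x ∈ α.dom ↔ (α.f x).isSome := by
  simp only [PInj.dom, Finset.mem_filter]
  refine ⟨fun h => h.2, fun h => ?_⟩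
  obtain ⟨y, hy⟩ := Option.isSome_iff_exists.mp h
  exact ⟨(α.mem_bounds hy).1, h⟩

theorem PInj.dom_subset (α : PInj n) : α.dom ⊆ Finset.Icc 1 n :=
  Finset.filter_subset _ _

theorem PInj.f_eq_some_app {α : PInj n} {x : ℕ} (h : (α.f x).isSome) :
    α.f x = some (α.app x) := by
  obtain ⟨y, hy⟩ := Option.isSome_iff_exists.mp h
  simp [PInj.app, hy]

theorem PInj.app_eq {α : PInj n} {x y : ℕ} (h : α.f x = some y) : α.app x = y := by
  simp [PInj.app, h]

theorem PInj.comp_f (α β : PInj n) (x : ℕ) : (α.comp β).f x = (α.f x).bind β.f := rfl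

open Classical in
/-- The inverse of a partial injection. -/
noncomputable def PInj.inv (α : PInj n) : PInj n where
  f y := if h : ∃ x, α.f x = some y then some h.choose else none
  mem_bounds := by
    intro y x h
    beta_reduce at h
    split at h
    · next hex =>
      rw [Option.some.injEq] at h
      have hs := hex.choose_spec
      rw [h] at hs
      exact ⟨(α.mem_bounds hs).2, (α.mem_bounds hs).1⟩
    · simp at h
  inj := by
    intro y₁ y₂ x h₁ h₂
    beta_reduce at h₁ h₂
    split at h₁
    · split at h₂
      · next e₁ e₂ =>
        rw [Option.some.injEq] at h₁ h₂
        have s₁ := e₁.choose_spec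
        have s₂ := e₂.choose_spec
        rw [h₁] at s₁; rw [h₂] at s₂
        rw [s₁] at s₂
        exact Option.some_inj.mp s₂
      · simp at h₂
    · simp at h₁

open Classical in
theorem PInj.inv_f (α : PInj n) (y : ℕ) :
    α.inv.f y = if h : ∃ x, α.f x = some y then some h.choose else none := rfl

theorem PInj.inv_f_eq_some {α : PInj n} {x y : ℕ} :
    α.inv.f y = some x ↔ α.f x = some y := by
  constructor
  · intro h
    rw [PInj.inv_f] at h
    split at h
    · next e =>
      rw [Option.some.injEq] at h
      rw [← h]
      exact e.choose_spec
    · simp at h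
  · intro h
    have e : ∃ x, α.f x = some y := ⟨x, h⟩
    rw [PInj.inv_f, dif_pos e, Option.some.injEq]
    exact α.inj e.choose_spec h

/-- The identity on `{1, …, n}`. -/
def one (n : ℕ) : PInj n where
  f x := if x ∈ Finset.Icc 1 n then some x else none
  mem_bounds := by
    intro x y h
    beta_reduce at h
    split at h
    · next hx => rw [Option.some.injEq] at h; subst h; exact ⟨hx, hx⟩
    · simp at h
  inj := by
    intro x₁ x₂ y h₁ h₂
    beta_reduce at h₁ h₂
    split at h₁
    · split at h₂
      · rw [Option.some.injEq] at h₁ h₂; omega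
      · simp at h₂
    · simp at h₁

theorem one_f (x : ℕ) :
    (one n).f x = if x ∈ Finset.Icc 1 n then some x else none := rfl

theorem one_f_eq {x y : ℕ} (h : (one n).f x = some y) : y = x := by
  rw [one_f] at h
  split at h
  · rw [Option.some.injEq] at h; omega
  · simp at h

theorem one_mem : one n ∈ IOF n := by
  refine ⟨?_, ?_, ?_, ?_⟩
  · intro x y x' y' hx hy h
    rw [one_f_eq hx, one_f_eq hy]; exact h
  · intro x y hx; rw [one_f_eq hx]
  · intro x y x' y' hx hy h
    rw [one_f_eq hx, one_f_eq hy]; exact h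
  · intro x y x' y' hx hy h
    rw [← one_f_eq hx, ← one_f_eq hy]; exact h

theorem one_comp (a : PInj n) : (one n).comp a = a := by
  apply PInj.ext'; funext x
  rw [PInj.comp_f]
  rw [one_f]
  by_cases hx : x ∈ Finset.Icc 1 n
  · rw [if_pos hx]; rfl
  · rw [if_neg hx]
    cases ha : a.f x with
    | none => rfl
    | some y => exact absurd (a.mem_bounds ha).1 hx

theorem comp_one (a : PInj n) : a.comp (one n) = a := by
  apply PInj.ext'; funext x
  rw [PInj.comp_f]
  cases ha : a.f x with
  | none => rfl
  | some y =>
    show (one n).f y = some y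
    rw [one_f, if_pos (a.mem_bounds ha).2]

theorem comp_assoc (a b c : PInj n) : (a.comp b).comp c = a.comp (b.comp c) := by
  apply PInj.ext'; funext x
  show ((a.f x).bind b.f).bind c.f = (a.f x).bind fun y => (b.f y).bind c.f
  exact Option.bind_assoc _ _ _

theorem comp_mem {a b : PInj n} (ha : a ∈ IOF n) (hb : b ∈ IOF n) :
    a.comp b ∈ IOF n := by
  obtain ⟨ha1, ha2, ha3, ha4⟩ := ha
  obtain ⟨hb1, hb2, hb3, hb4⟩ := hb
  refine ⟨?_, ?_, ?_, ?_⟩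
  · intro x y x' y' hx hy hlt
    rcases Option.bind_eq_some_iff.mp hx with ⟨u, hu, hu'⟩
    rcases Option.bind_eq_some_iff.mp hy with ⟨v, hv, hv'⟩
    exact hb1 hu' hv' (ha1 hu hv hlt)
  · intro x y hx
    rcases Option.bind_eq_some_iff.mp hx with ⟨u, hu, hu'⟩
    exact (ha2 hu).trans (hb2 hu')
  · intro x y x' y' hx hy hf
    rcases Option.bind_eq_some_iff.mp hx with ⟨u, hu, hu'⟩
    rcases Option.bind_eq_some_iff.mp hy with ⟨v, hv, hv'⟩
    exact hb3 hu' hv' (ha3 hu hv hf)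
  · intro x y x' y' hx hy hf
    rcases Option.bind_eq_some_iff.mp hx with ⟨u, hu, hu'⟩
    rcases Option.bind_eq_some_iff.mp hy with ⟨v, hv, hv'⟩
    exact ha4 hu hv (hb4 hu' hv' hf)

theorem inv_mem {a : PInj n} (ha : a ∈ IOF n) : a.inv ∈ IOF n := by
  obtain ⟨h1, h2, h3, h4⟩ := ha
  refine ⟨?_, ?_, ?_, ?_⟩
  · intro x y x' y' hx hy hlt
    rw [PInj.inv_f_eq_some] at hx hy
    rcases lt_trichotomy x' y' with h | h | h
    · exact h
    · subst h; rw [hx] at hy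
      exact absurd (Option.some_inj.mp hy) (by omega)
    · exact absurd (h1 hy hx h) (by omega)
  · intro x y hx
    rw [PInj.inv_f_eq_some] at hx
    exact (h2 hx).symm
  · intro x y x' y' hx hy hf
    rw [PInj.inv_f_eq_some] at hx hy
    exact h4 hx hy hf
  · intro x y x' y' hx hy hf
    rw [PInj.inv_f_eq_some] at hx hy
    exact h3 hx hy hf

theorem mem_jset_self (a : PInj n) : a ∈ jset n a :=
  ⟨one n, one_mem, one n, one_mem, by rw [one_comp, comp_one]⟩

theorem jset_subset {a b : PInj n} (hb : b ∈ jset n a) : jset n b ⊆ jset n a := by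
  rintro c ⟨m₁, hm₁, m₂, hm₂, rfl⟩
  rcases hb with ⟨k₁, hk₁, k₂, hk₂, rfl⟩
  refine ⟨m₁.comp k₁, comp_mem hm₁ hk₁, k₂.comp m₂, comp_mem hk₂ hm₂, ?_⟩
  simp only [comp_assoc]

/-! ### Properties of `sim` -/

theorem length_sortedList (A : Finset ℕ) : (sortedList A).length = A.card :=
  Finset.length_sort _

theorem mem_sortedList {A : Finset ℕ} {x : ℕ} : x ∈ sortedList A ↔ x ∈ A :=
  Finset.mem_sort _

theorem sortedList_getElem_mem {A : Finset ℕ} {r : ℕ} (h : r < (sortedList A).length) :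
    (sortedList A)[r] ∈ A :=
  mem_sortedList.mp (List.getElem_mem h)

theorem sortedList_getElem_lt {A : Finset ℕ} {i j : ℕ} (hi : i < (sortedList A).length)
    (hj : j < (sortedList A).length) (h : i < j) : (sortedList A)[i] < (sortedList A)[j] :=
  List.pairwise_iff_getElem.mp (A.sortedLT_sort.pairwise) i j hi hj h

theorem sortedList_lt_idx {A : Finset ℕ} {i j : ℕ} (hi : i < (sortedList A).length)
    (hj : j < (sortedList A).length) (h : (sortedList A)[i] < (sortedList A)[j]) : i < j := by
  rcases lt_trichotomy i j with h' | h' | h'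
  · exact h'
  · subst h'; omega
  · exact absurd (sortedList_getElem_lt hj hi h') (by omega)

theorem sortedList_adj_idx {A : Finset ℕ} {i j : ℕ} (hi : i < (sortedList A).length)
    (hj : j < (sortedList A).length) (h : (sortedList A)[j] = (sortedList A)[i] + 1) :
    j = i + 1 := by
  have hij : i < j := sortedList_lt_idx hi hj (by omega)
  by_contra hne
  have h1 : i + 1 < j := by omega
  have a1 := sortedList_getElem_lt (show i + 1 < (sortedList A).length by omega) hj h1
  have a2 := sortedList_getElem_lt hi (show i + 1 < (sortedList A).length by omega)
    (Nat.lt_succ_self i)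
  omega

theorem sim_refl (A : Finset ℕ) : sim A A :=
  ⟨rfl, fun _ _ _ => rfl, fun _ _ _ => Iff.rfl⟩

theorem sim_symm {A B : Finset ℕ} (h : sim A B) : sim B A :=
  ⟨h.1.symm, fun r hB hA => (h.2.1 r hA hB).symm, fun r hB hA => (h.2.2 r hA hB).symm⟩

theorem sim_trans {A B C : Finset ℕ} (hAB : sim A B) (hBC : sim B C) : sim A C := by
  obtain ⟨c1, p1, a1⟩ := hAB
  obtain ⟨c2, p2, a2⟩ := hBC
  refine ⟨c1.trans c2, ?_, ?_⟩
  · intro r hA hC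
    have hB : r < (sortedList B).length := by
      rw [length_sortedList, ← c1, ← length_sortedList]; exact hA
    exact (p1 r hA hB).trans (p2 r hB hC)
  · intro r hA hC
    have hB : r + 1 < (sortedList B).length := by
      rw [length_sortedList, ← c1, ← length_sortedList]; exact hA
    exact (a1 r hA hB).trans (a2 r hB hC)

theorem sortedList_image {A : Finset ℕ} {f : ℕ → ℕ}
    (hmono : ∀ x ∈ A, ∀ y ∈ A, x < y → f x < f y) :
    sortedList (A.image f) = (sortedList A).map f := by
  classical
  have hinj : ∀ x ∈ A, ∀ y ∈ A, f x = f y → x = y := by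
    intro x hx y hy hxy
    rcases lt_trichotomy x y with h | h | h
    · exact absurd hxy (ne_of_lt (hmono x hx y hy h))
    · exact h
    · exact absurd hxy.symm (ne_of_lt (hmono y hy x hx h))
  refine (fun hp h1 h2 => List.Perm.eq_of_pairwise' (r := (· ≤ ·)) h1 h2 hp) ?_ ?_ ?_
  · apply List.perm_of_nodup_nodup_toFinset_eq (Finset.sort_nodup _ _)
    · exact List.Nodup.map_on
        (fun x hx y hy => hinj x (mem_sortedList.mp hx) y (mem_sortedList.mp hy))
        (Finset.sort_nodup _ _)
    · ext y
      simp only [List.mem_toFinset, List.mem_map, Finset.mem_sort, Finset.mem_image,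
        sortedList]
  · exact Finset.pairwise_sort _ _
  · rw [List.pairwise_iff_getElem]
    intro i j hi hj hij
    simp only [List.getElem_map]
    have hi' : i < (sortedList A).length := by simpa using hi
    have hj' : j < (sortedList A).length := by simpa using hj
    exact le_of_lt (hmono _ (sortedList_getElem_mem hi') _ (sortedList_getElem_mem hj')
      (sortedList_getElem_lt hi' hj' hij))

theorem sim_of_map {A : Finset ℕ} {f : ℕ → ℕ}
    (hmono : ∀ x ∈ A, ∀ y ∈ A, x < y → f x < f y)
    (hpar : ∀ x ∈ A, x % 2 = f x % 2)
    (hadj : ∀ x ∈ A, ∀ y ∈ A, y = x + 1 → f y = f x + 1)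
    (hadj' : ∀ x ∈ A, ∀ y ∈ A, f y = f x + 1 → y = x + 1) :
    sim A (A.image f) := by
  classical
  have hinj : Set.InjOn f ↑A := by
    intro x hx y hy hxy
    rcases lt_trichotomy x y with h | h | h
    · exact absurd hxy (ne_of_lt (hmono x hx y hy h))
    · exact h
    · exact absurd hxy.symm (ne_of_lt (hmono y hy x hx h))
  have hmap := sortedList_image hmono
  have hcard : A.card = (A.image f).card := (Finset.card_image_of_injOn hinj).symm
  have hgetB : ∀ (r : ℕ) (hB : r < (sortedList (A.image f)).length)
      (hA : r < (sortedList A).length),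
      (sortedList (A.image f))[r] = f ((sortedList A)[r]) := by
    intro r hB hA
    rw [List.getElem_of_eq hmap hB, List.getElem_map]
  refine ⟨hcard, ?_, ?_⟩
  · intro r hA hB
    rw [hgetB r hB hA]
    exact hpar _ (sortedList_getElem_mem hA)
  · intro r hA hB
    have hA' : r < (sortedList A).length := by omega
    have hB' : r < (sortedList (A.image f)).length := by omega
    rw [hgetB (r+1) hB hA, hgetB r hB' hA']
    constructor
    · intro h
      exact hadj _ (sortedList_getElem_mem hA') _ (sortedList_getElem_mem hA) h
    · intro h
      exact hadj' _ (sortedList_getElem_mem hA') _ (sortedList_getElem_mem hA) h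

theorem sim_image_app {m : PInj n} (hm : m ∈ IOF n) {A : Finset ℕ}
    (hA : ∀ x ∈ A, (m.f x).isSome) : sim A (A.image m.app) := by
  obtain ⟨h1, h2, h3, h4⟩ := hm
  have hf : ∀ x ∈ A, m.f x = some (m.app x) := fun x hx => PInj.f_eq_some_app (hA x hx)
  apply sim_of_map
  · intro x hx y hy hlt
    exact h1 (hf x hx) (hf y hy) hlt
  · intro x hx
    exact h2 (hf x hx)
  · intro x hx y hy hyx
    have hfx := hf x hx
    have hfy := hf y hy
    have hlt : m.app x < m.app y := h1 hfx hfy (by omega)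
    rcases Nat.even_or_odd x with he | ho
    · have hodd : Odd y := by rw [hyx]; exact he.add_one
      have hfence : fence y x := ⟨Or.inr hyx, hodd, he⟩
      have hres := h3 hfy hfx hfence
      rcases hres.1 with h | h <;> omega
    · have heven : Even y := by rw [hyx]; exact ho.add_one
      have hfence : fence x y := ⟨Or.inl hyx, ho, heven⟩
      have hres := h3 hfx hfy hfence
      rcases hres.1 with h | h <;> omega
  · intro x hx y hy happ
    have hfx := hf x hx
    have hfy := hf y hy
    have hxy : x < y := by
      rcases lt_trichotomy x y with h | h | h
      · exact h
      · exfalso; subst h; omega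
      · exact absurd (h1 hfy hfx h) (by omega)
    rcases Nat.even_or_odd (m.app x) with he | ho
    · have hodd : Odd (m.app y) := by rw [happ]; exact he.add_one
      have hfence : fence (m.app y) (m.app x) := ⟨Or.inr happ, hodd, he⟩
      have hres := h4 hfy hfx hfence
      rcases hres.1 with h | h <;> omega
    · have heven : Even (m.app y) := by rw [happ]; exact ho.add_one
      have hfence : fence (m.app x) (m.app y) := ⟨Or.inl happ, ho, heven⟩
      have hres := h4 hfx hfy hfence
      rcases hres.1 with h | h <;> omega

theorem im_eq_image (a : PInj n) : a.im = a.dom.image a.app := by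
  classical
  ext y
  simp only [PInj.im, Finset.mem_filter, Finset.mem_image]
  constructor
  · rintro ⟨hy, x, hx⟩
    exact ⟨x, PInj.mem_dom.mpr (by simp [hx]), PInj.app_eq hx⟩
  · rintro ⟨x, hx, rfl⟩
    have hs := PInj.mem_dom.mp hx
    have hfx := PInj.f_eq_some_app hs
    exact ⟨(a.mem_bounds hfx).2, x, hfx⟩

theorem sim_dom_im {a : PInj n} (ha : a ∈ IOF n) : sim a.dom a.im := by
  rw [im_eq_image]
  exact sim_image_app ha (fun x hx => PInj.mem_dom.mp hx)

/-! ### The forward direction -/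

theorem exists_map_of_mem_jset {a b : PInj n} (hba : b ∈ jset n a) :
    ∃ m : PInj n, m ∈ IOF n ∧ (∀ x ∈ b.dom, (m.f x).isSome) ∧
      b.dom.image m.app ⊆ a.dom := by
  classical
  obtain ⟨m₁, hm₁, m₂, hm₂, hcomp⟩ := hba
  refine ⟨m₁, hm₁, ?_, ?_⟩
  · intro x hx
    have hs := PInj.mem_dom.mp hx
    obtain ⟨w, hw⟩ := Option.isSome_iff_exists.mp hs
    rw [← hcomp] at hw
    rw [PInj.comp_f] at hw
    rcases Option.bind_eq_some_iff.mp hw with ⟨v, hv, hv'⟩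
    rw [PInj.comp_f] at hv
    rcases Option.bind_eq_some_iff.mp hv with ⟨u, hu, hu'⟩
    simp [hu]
  · intro y hy
    rw [Finset.mem_image] at hy
    obtain ⟨x, hx, rfl⟩ := hy
    have hs := PInj.mem_dom.mp hx
    obtain ⟨w, hw⟩ := Option.isSome_iff_exists.mp hs
    rw [← hcomp] at hw
    rw [PInj.comp_f] at hw
    rcases Option.bind_eq_some_iff.mp hw with ⟨v, hv, hv'⟩
    rw [PInj.comp_f] at hv
    rcases Option.bind_eq_some_iff.mp hv with ⟨u, hu, hu'⟩
    rw [PInj.app_eq hu]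
    exact PInj.mem_dom.mpr (by simp [hu'])

theorem injOn_app_dom {m : PInj n} {A : Finset ℕ} (hA : ∀ x ∈ A, (m.f x).isSome) :
    Set.InjOn m.app ↑A := by
  intro x hx y hy hxy
  have hfx := PInj.f_eq_some_app (hA x hx)
  have hfy := PInj.f_eq_some_app (hA y hy)
  rw [hxy] at hfx
  exact m.inj hfx hfy

theorem card_dom_le {a b : PInj n} (hba : b ∈ jset n a) : b.dom.card ≤ a.dom.card := by
  classical
  obtain ⟨m, hm, hsome, hsub⟩ := exists_map_of_mem_jset hba
  calc b.dom.card = (b.dom.image m.app).card :=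
        (Finset.card_image_of_injOn (injOn_app_dom hsome)).symm
    _ ≤ a.dom.card := Finset.card_le_card hsub

theorem sim_dom_of_jset {a b : PInj n} (hba : b ∈ jset n a) (hab : a ∈ jset n b) :
    sim a.dom b.dom := by
  classical
  obtain ⟨m, hm, hsome, hsub⟩ := exists_map_of_mem_jset hba
  have hc₁ := card_dom_le hba
  have hc₂ := card_dom_le hab
  have hcard : (b.dom.image m.app).card = b.dom.card :=
    Finset.card_image_of_injOn (injOn_app_dom hsome)
  have himg : b.dom.image m.app = a.dom :=
    Finset.eq_of_subset_of_card_le hsub (by omega)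
  have := sim_image_app hm hsome
  rw [himg] at this
  exact sim_symm this

/-! ### The backward direction: the canonical map -/

/-- The canonical partial injection sending the `r`-th element of `B` to the
`r`-th element of `A`. -/
def canonMap (n : ℕ) (A B : Finset ℕ) (hA : A ⊆ Finset.Icc 1 n)
    (hB : B ⊆ Finset.Icc 1 n)
    (hlen : (sortedList B).length = (sortedList A).length) : PInj n where
  f x := if hx : x ∈ sortedList B then
      some ((sortedList A)[(sortedList B).idxOf x]'
        (hlen ▸ List.idxOf_lt_length_iff.mpr hx))
    else none
  mem_bounds := by
    intro x y h
    beta_reduce at h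
    split at h
    · next hx =>
      rw [Option.some.injEq] at h
      refine ⟨hB (mem_sortedList.mp hx), ?_⟩
      rw [← h]
      exact hA (sortedList_getElem_mem _)
    · simp at h
  inj := by
    intro x₁ x₂ y h₁ h₂
    beta_reduce at h₁ h₂
    split at h₁
    · split at h₂
      · next hx₁ hx₂ =>
        rw [Option.some.injEq] at h₁ h₂
        have hidx : (sortedList B).idxOf x₁ = (sortedList B).idxOf x₂ :=
          (List.Nodup.getElem_inj_iff (Finset.sort_nodup _ _)).mp (h₁.trans h₂.symm)
        exact (List.idxOf_inj hx₁).mp hidx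
      · simp at h₂
    · simp at h₁

theorem canonMap_f {A B : Finset ℕ} (hA : A ⊆ Finset.Icc 1 n)
    (hB : B ⊆ Finset.Icc 1 n) (hlen : (sortedList B).length = (sortedList A).length)
    (x : ℕ) :
    (canonMap n A B hA hB hlen).f x = if hx : x ∈ sortedList B then
      some ((sortedList A)[(sortedList B).idxOf x]'
        (hlen ▸ List.idxOf_lt_length_iff.mpr hx))
    else none := rfl

theorem canonMap_f_eq_some {A B : Finset ℕ} {hA : A ⊆ Finset.Icc 1 n}
    {hB : B ⊆ Finset.Icc 1 n} {hlen : (sortedList B).length = (sortedList A).length}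
    {x y : ℕ} :
    (canonMap n A B hA hB hlen).f x = some y ↔
      ∃ (r : ℕ) (hr : r < (sortedList B).length) (hr' : r < (sortedList A).length),
        x = (sortedList B)[r] ∧ y = (sortedList A)[r] := by
  constructor
  · intro h
    rw [canonMap_f] at h
    split at h
    · next hx =>
      rw [Option.some.injEq] at h
      refine ⟨(sortedList B).idxOf x, List.idxOf_lt_length_iff.mpr hx,
        hlen ▸ List.idxOf_lt_length_iff.mpr hx, ?_, h.symm⟩
      exact (List.getElem_idxOf (List.idxOf_lt_length_iff.mpr hx)).symm
    · simp at h
  · rintro ⟨r, hr, hr', rfl, rfl⟩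
    have hx : (sortedList B)[r] ∈ sortedList B := List.getElem_mem hr
    rw [canonMap_f, dif_pos hx, Option.some.injEq]
    have hidx : (sortedList B).idxOf (sortedList B)[r] = r :=
      (List.Nodup.getElem_inj_iff (Finset.sort_nodup _ _)).mp
        (List.getElem_idxOf (List.idxOf_lt_length_iff.mpr hx))
    simp only [hidx]

theorem canonMap_mem_IOF {A B : Finset ℕ} (hA : A ⊆ Finset.Icc 1 n)
    (hB : B ⊆ Finset.Icc 1 n) (hlen : (sortedList B).length = (sortedList A).length)
    (hpar : ∀ (r : ℕ) (h1 : r < (sortedList B).length) (h2 : r < (sortedList A).length),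
      (sortedList B)[r] % 2 = (sortedList A)[r] % 2)
    (hadj : ∀ (r : ℕ) (h1 : r + 1 < (sortedList B).length)
      (h2 : r + 1 < (sortedList A).length),
      ((sortedList B)[r + 1] = (sortedList B)[r] + 1 ↔
        (sortedList A)[r + 1] = (sortedList A)[r] + 1)) :
    canonMap n A B hA hB hlen ∈ IOF n := by
  have hkey : ∀ {x y : ℕ}, (canonMap n A B hA hB hlen).f x = some y →
      ∃ (r : ℕ) (hr : r < (sortedList B).length) (hr' : r < (sortedList A).length),
        x = (sortedList B)[r] ∧ y = (sortedList A)[r] := fun h => canonMap_f_eq_some.mp h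
  -- helper for adjacency transfer
  have step : ∀ (r s : ℕ) (hr : r < (sortedList B).length) (hs : s < (sortedList B).length)
      (hr' : r < (sortedList A).length) (hs' : s < (sortedList A).length),
      (sortedList B)[s] = (sortedList B)[r] + 1 →
      (sortedList A)[s] = (sortedList A)[r] + 1 := by
    intro r s hr hs hr' hs' h
    have hsr : s = r + 1 := sortedList_adj_idx hr hs h
    subst hsr
    exact (hadj r hs hs').mp h
  have step' : ∀ (r s : ℕ) (hr : r < (sortedList B).length) (hs : s < (sortedList B).length)
      (hr' : r < (sortedList A).length) (hs' : s < (sortedList A).length),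
      (sortedList A)[s] = (sortedList A)[r] + 1 →
      (sortedList B)[s] = (sortedList B)[r] + 1 := by
    intro r s hr hs hr' hs' h
    have hsr : s = r + 1 := sortedList_adj_idx hr' hs' h
    subst hsr
    exact (hadj r hs hs').mpr h
  refine ⟨?_, ?_, ?_, ?_⟩
  · intro x y x' y' hx hy hlt
    obtain ⟨r, hr, hr', rfl, rfl⟩ := hkey hx
    obtain ⟨s, hs, hs', rfl, rfl⟩ := hkey hy
    exact sortedList_getElem_lt hr' hs' (sortedList_lt_idx hr hs hlt)
  · intro x y hx
    obtain ⟨r, hr, hr', rfl, rfl⟩ := hkey hx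
    exact hpar r hr hr'
  · intro x y x' y' hx hy hf
    obtain ⟨r, hr, hr', rfl, rfl⟩ := hkey hx
    obtain ⟨s, hs, hs', rfl, rfl⟩ := hkey hy
    obtain ⟨hd, ho, he⟩ := hf
    rcases hd with h | h
    · refine ⟨Or.inl (step r s hr hs hr' hs' h), ?_, ?_⟩
      · rw [Nat.odd_iff] at ho ⊢; rw [← hpar r hr hr']; exact ho
      · rw [Nat.even_iff] at he ⊢; rw [← hpar s hs hs']; exact he
    · refine ⟨Or.inr (step s r hs hr hs' hr' h), ?_, ?_⟩
      · rw [Nat.odd_iff] at ho ⊢; rw [← hpar r hr hr']; exact ho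
      · rw [Nat.even_iff] at he ⊢; rw [← hpar s hs hs']; exact he
  · intro x y x' y' hx hy hf
    obtain ⟨r, hr, hr', rfl, rfl⟩ := hkey hx
    obtain ⟨s, hs, hs', rfl, rfl⟩ := hkey hy
    obtain ⟨hd, ho, he⟩ := hf
    rcases hd with h | h
    · refine ⟨Or.inl (step' r s hr hs hr' hs' h), ?_, ?_⟩
      · rw [Nat.odd_iff] at ho ⊢; rw [hpar r hr hr']; exact ho
      · rw [Nat.even_iff] at he ⊢; rw [hpar s hs hs']; exact he
    · refine ⟨Or.inr (step' s r hs hr hs' hr' h), ?_, ?_⟩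
      · rw [Nat.odd_iff] at ho ⊢; rw [hpar r hr hr']; exact ho
      · rw [Nat.even_iff] at he ⊢; rw [hpar s hs hs']; exact he

theorem mem_jset_of_sim {a b : PInj n} (ha : a ∈ IOF n) (hb : b ∈ IOF n)
    (hsim : sim a.dom b.dom) : b ∈ jset n a := by
  classical
  obtain ⟨hcard, hpar, hadj⟩ := sim_symm hsim
  have hlen : (sortedList b.dom).length = (sortedList a.dom).length := by
    rw [length_sortedList, length_sortedList]; exact hcard
  set m₁ := canonMap n a.dom b.dom a.dom_subset b.dom_subset hlen with hm₁def
  have hm₁ : m₁ ∈ IOF n := canonMap_mem_IOF _ _ _ hpar hadj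
  set α := m₁.comp a with hαdef
  have hα : α ∈ IOF n := comp_mem hm₁ ha
  have hdom : ∀ x : ℕ, (α.f x).isSome ↔ (b.f x).isSome := by
    intro x
    constructor
    · intro h
      obtain ⟨w, hw⟩ := Option.isSome_iff_exists.mp h
      rw [hαdef, PInj.comp_f] at hw
      rcases Option.bind_eq_some_iff.mp hw with ⟨u, hu, hu'⟩
      obtain ⟨r, hr, hr', rfl, rfl⟩ := canonMap_f_eq_some.mp hu
      have : (sortedList b.dom)[r] ∈ b.dom := sortedList_getElem_mem hr
      exact PInj.mem_dom.mp this
    · intro h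
      have hxB : x ∈ b.dom := PInj.mem_dom.mpr h
      have hxL : x ∈ sortedList b.dom := mem_sortedList.mpr hxB
      set r := (sortedList b.dom).idxOf x with hrdef
      have hr : r < (sortedList b.dom).length := List.idxOf_lt_length_iff.mpr hxL
      have hr' : r < (sortedList a.dom).length := hlen ▸ hr
      have hm₁x : m₁.f x = some ((sortedList a.dom)[r]) := by
        apply canonMap_f_eq_some.mpr
        exact ⟨r, hr, hr', (List.getElem_idxOf hr).symm, rfl⟩
      have hmem : (sortedList a.dom)[r] ∈ a.dom := sortedList_getElem_mem hr'
      have hsome : (a.f ((sortedList a.dom)[r])).isSome := PInj.mem_dom.mp hmem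
      rw [hαdef, PInj.comp_f, hm₁x]
      simpa using hsome
  refine ⟨m₁, hm₁, α.inv.comp b, comp_mem (inv_mem hα) hb, ?_⟩
  apply PInj.ext'
  funext x
  show (α.f x).bind (fun u => (α.inv.f u).bind b.f) = b.f x
  cases hαx : α.f x with
  | none =>
    have : ¬ (b.f x).isSome := by rw [← hdom]; simp [hαx]
    rw [Option.not_isSome_iff_eq_none] at this
    rw [this]
    rfl
  | some u =>
    have hinv : α.inv.f u = some x := PInj.inv_f_eq_some.mpr hαx
    simp [hinv]

end Aux

/-- Green's relation `J` on the monoid `M = IOF_n^par`: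
`a J b` iff `dom(a) ∼ dom(b)`, and equivalently iff `im(a) ∼ im(b)`. -/
theorem statement_6 (n : ℕ) (hn : 0 < n) (a b : PInj n)
    (ha : a ∈ IOF n) (hb : b ∈ IOF n) :
    (jset n a = jset n b ↔ sim a.dom b.dom) ∧
    (jset n a = jset n b ↔ sim a.im b.im) := by
  have key : jset n a = jset n b ↔ sim a.dom b.dom := by
    constructor
    · intro h
      have hba : b ∈ jset n a := by rw [h]; exact mem_jset_self b
      have hab : a ∈ jset n b := by rw [← h]; exact mem_jset_self a
      exact sim_dom_of_jset hba hab
    · intro h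
      apply Set.Subset.antisymm
      · exact jset_subset (mem_jset_of_sim hb ha (sim_symm h))
      · exact jset_subset (mem_jset_of_sim ha hb h)
  refine ⟨key, key.trans ?_⟩
  constructor
  · intro h
    exact sim_trans (sim_trans (sim_symm (sim_dom_im ha)) h) (sim_dom_im hb)
  · intro h
    exact sim_trans (sim_trans (sim_dom_im ha) h) (sim_symm (sim_dom_im hb))

end IOFpar
end

section
/- If P* ⊆ P(n̄) is admissible, then I_{P*} is an ideal of the monoid IOF_n^par. -/
namespace IOFpar

lemma mem_dom_iff {n : ℕ} (α : PInj n) (x : ℕ) : x ∈ α.dom ↔ (α.f x).isSome := by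
  unfold PInj.dom
  simp only [Finset.mem_filter]
  constructor
  · exact fun h => h.2
  · intro h
    rcases Option.isSome_iff_exists.mp h with ⟨y, hy⟩
    exact ⟨(α.mem_bounds hy).1, h⟩

lemma app_spec {n : ℕ} (α : PInj n) {x : ℕ} (h : (α.f x).isSome) :
    α.f x = some (α.app x) := by
  rcases Option.isSome_iff_exists.mp h with ⟨y, hy⟩
  simp [PInj.app, hy]

lemma epsilon_mem_IOF (n : ℕ) : epsilon n ∈ IOF n :=
  ⟨fun _ _ _ _ h => by simp [epsilon] at h, fun _ _ h => by simp [epsilon] at h,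
   fun _ _ _ _ h => by simp [epsilon] at h, fun _ _ _ _ h => by simp [epsilon] at h⟩

lemma epsilon_dom (n : ℕ) : (epsilon n).dom = ∅ := by
  ext x; simp [PInj.dom, epsilon]

lemma IOF_comp {n : ℕ} {a b : PInj n} (ha : a ∈ IOF n) (hb : b ∈ IOF n) :
    a.comp b ∈ IOF n := by
  obtain ⟨ha1, ha2, ha3, ha4⟩ := ha
  obtain ⟨hb1, hb2, hb3, hb4⟩ := hb
  refine ⟨?_, ?_, ?_, ?_⟩
  · intro x y x' y' hx hy hxy
    rcases Option.bind_eq_some_iff.mp hx with ⟨z₁, hz₁, hz₁'⟩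
    rcases Option.bind_eq_some_iff.mp hy with ⟨z₂, hz₂, hz₂'⟩
    exact hb1 hz₁' hz₂' (ha1 hz₁ hz₂ hxy)
  · intro x y hx
    rcases Option.bind_eq_some_iff.mp hx with ⟨z, hz, hz'⟩
    exact (ha2 hz).trans (hb2 hz')
  · intro x y x' y' hx hy hf
    rcases Option.bind_eq_some_iff.mp hx with ⟨z₁, hz₁, hz₁'⟩
    rcases Option.bind_eq_some_iff.mp hy with ⟨z₂, hz₂, hz₂'⟩
    exact hb3 hz₁' hz₂' (ha3 hz₁ hz₂ hf)
  · intro x y x' y' hx hy hf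
    rcases Option.bind_eq_some_iff.mp hx with ⟨z₁, hz₁, hz₁'⟩
    rcases Option.bind_eq_some_iff.mp hy with ⟨z₂, hz₂, hz₂'⟩
    exact ha4 hz₁ hz₂ (hb4 hz₁' hz₂' hf)

lemma dom_comp_subset {n : ℕ} (a b : PInj n) : (a.comp b).dom ⊆ a.dom := by
  intro x hx
  rw [mem_dom_iff] at hx ⊢
  simp only [PInj.comp] at hx
  cases h : a.f x with
  | none => rw [h] at hx; simp at hx
  | some y => simp [h]

lemma injOn_app {n : ℕ} (b : PInj n) (S : Finset ℕ)
    (hS : ∀ x ∈ S, (b.f x).isSome) : Set.InjOn b.app S := by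
  intro x₁ h₁ x₂ h₂ he
  have e₁ := app_spec b (hS x₁ h₁)
  have e₂ := app_spec b (hS x₂ h₂)
  rw [he] at e₁
  exact b.inj e₁ e₂

lemma eq_of_perm_of_sorted_aux {l₁ l₂ : List ℕ} (hp : l₁.Perm l₂)
    (h1 : l₁.Pairwise (· ≤ ·)) (h2 : l₂.Pairwise (· ≤ ·)) : l₁ = l₂ :=
  List.Perm.eq_of_pairwise (fun _ _ _ _ h h' => le_antisymm h h') h1 h2 hp

lemma sortedList_image_s7 {n : ℕ} (b : PInj n) (hb : b ∈ IOF n) (S : Finset ℕ)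
    (hS : ∀ x ∈ S, (b.f x).isSome) :
    sortedList (S.image b.app) = (sortedList S).map b.app := by
  have hinj : Set.InjOn b.app S := injOn_app b S hS
  have hmono : ∀ x ∈ S, ∀ y ∈ S, x < y → b.app x < b.app y := by
    intro x hx y hy hxy
    exact hb.1 (app_spec b (hS x hx)) (app_spec b (hS y hy)) hxy
  apply eq_of_perm_of_sorted_aux
  · rw [← Multiset.coe_eq_coe]
    show ((S.image b.app).sort (· ≤ ·) : Multiset ℕ) = ((S.sort (· ≤ ·)).map b.app : Multiset ℕ)
    rw [Finset.sort_eq, Finset.image_val_of_injOn hinj, ← Multiset.map_coe, Finset.sort_eq]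
  · exact Finset.pairwise_sort _ _
  · unfold sortedList
    rw [List.pairwise_map]
    have := (Finset.sortedLT_sort S).pairwise
    refine this.imp_of_mem ?_
    intro x y hx hy hxy
    have hx' : x ∈ S := (Finset.mem_sort _).mp hx
    have hy' : y ∈ S := (Finset.mem_sort _).mp hy
    exact le_of_lt (hmono x hx' y hy' hxy)

lemma sim_image {n : ℕ} (b : PInj n) (hb : b ∈ IOF n) (S : Finset ℕ)
    (hS : ∀ x ∈ S, (b.f x).isSome) : sim S (S.image b.app) := by
  have hinj : Set.InjOn b.app S := injOn_app b S hS
  have hmono : ∀ x ∈ S, ∀ y ∈ S, x < y → b.app x < b.app y := by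
    intro x hx y hy hxy
    exact hb.1 (app_spec b (hS x hx)) (app_spec b (hS y hy)) hxy
  have hlist := sortedList_image_s7 b hb S hS
  have hmem : ∀ (r : ℕ) (hr : r < (sortedList S).length), (sortedList S)[r] ∈ S := by
    intro r hr
    exact (Finset.mem_sort _).mp (List.getElem_mem hr)
  refine ⟨(Finset.card_image_of_injOn hinj).symm, ?_, ?_⟩
  · intro r hA hB
    simp only [hlist, List.getElem_map]
    rw [hlist] at hB
    have hx : (sortedList S)[r] ∈ S := hmem r (by simpa using hB)
    exact hb.2.1 (app_spec b (hS _ hx))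
  · intro r hA hB
    simp only [hlist, List.getElem_map]
    rw [hlist] at hB
    have hr1 : r + 1 < (sortedList S).length := by simpa using hB
    have hr : r < (sortedList S).length := Nat.lt_of_succ_lt hr1
    set x := (sortedList S)[r] with hxdef
    set y := (sortedList S)[r+1] with hydef
    have hx : x ∈ S := hmem r hr
    have hy : y ∈ S := hmem (r+1) hr1
    have hxy : x < y := by
      have := (Finset.sortedLT_sort S).pairwise
      rw [List.pairwise_iff_getElem] at this
      exact this r (r+1) hr hr1 (Nat.lt_succ_self r)
    have happx := app_spec b (hS x hx)
    have happy := app_spec b (hS y hy)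
    have happlt : b.app x < b.app y := hmono x hx y hy hxy
    constructor
    · intro h
      rcases Nat.even_or_odd x with hex | hox
      · -- x even, y = x + 1 odd, fence y x
        have hf : fence y x := ⟨Or.inr h, by rw [h]; exact hex.add_one, hex⟩
        have := hb.2.2.1 happy happx hf
        rcases this.1 with h' | h'
        · omega
        · exact h'
      · have hf : fence x y := ⟨Or.inl h, hox, by rw [h]; exact hox.add_one⟩
        have := hb.2.2.1 happx happy hf
        rcases this.1 with h' | h'
        · exact h'
        · omega
    · intro h
      rcases Nat.even_or_odd (b.app x) with hex | hox
      · have hf : fence (b.app y) (b.app x) := ⟨Or.inr h, by rw [h]; exact hex.add_one, hex⟩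
        have := hb.2.2.2 happy happx hf
        rcases this.1 with h' | h'
        · omega
        · exact h'
      · have hf : fence (b.app x) (b.app y) := ⟨Or.inl h, hox, by rw [h]; exact hox.add_one⟩
        have := hb.2.2.2 happx happy hf
        rcases this.1 with h' | h'
        · exact h'
        · omega

/-- If `P* ⊆ P(n̄)` is admissible, then `I_{P*}` is an ideal of
the monoid `IOF_n^par`. -/
theorem statement_7 (n : ℕ) (hn : 0 < n) (P : Set (Finset ℕ))
    (hP : Admissible n P) : IsIdeal n (IX n P) := by
  obtain ⟨hP1, hP2, hP3, hP4⟩ := hP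
  refine ⟨⟨epsilon n, epsilon_mem_IOF n, by rw [epsilon_dom]; exact hP2⟩,
    fun a ha => ha.1, ?_⟩
  intro a ha b hb
  obtain ⟨haIOF, hadom⟩ := ha
  constructor
  · -- a.comp b
    refine ⟨IOF_comp haIOF hb, ?_⟩
    exact hP3 ∅ hP2 a.dom hadom _ (Finset.empty_subset _) (dom_comp_subset a b)
  · -- b.comp a
    refine ⟨IOF_comp hb haIOF, ?_⟩
    set S := (b.comp a).dom with hSdef
    have hS : ∀ x ∈ S, (b.f x).isSome := by
      intro x hx
      rw [hSdef, mem_dom_iff] at hx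
      simp only [PInj.comp] at hx
      cases h : b.f x with
      | none => rw [h] at hx; simp at hx
      | some y => simp
    have hTsub : S.image b.app ⊆ a.dom := by
      intro y hy
      rcases Finset.mem_image.mp hy with ⟨x, hx, rfl⟩
      have hbx := app_spec b (hS x hx)
      have hx' := hx
      rw [hSdef, mem_dom_iff] at hx'
      simp only [PInj.comp, hbx, Option.bind_some] at hx'
      rw [mem_dom_iff]
      exact hx'
    have hT : S.image b.app ∈ P :=
      hP3 ∅ hP2 a.dom hadom _ (Finset.empty_subset _) hTsub
    exact hP4 (S.image b.app) hT S (Finset.filter_subset _ _)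
      (sim_image b hb S hS)

end IOFpar
end
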